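/- Let W be a nonempty countable subset of the positive reals and L a finite set of labels with |L| ≥ 2, and fix l₀ ∈ L. Let 𝒴 be the set of strings of ⟨W,L⟩ (nonempty finite sequences of runs (ν,l) ∈ W × L with consecutive labels distinct) that have at least two runs, whose first run carries label l₀, and all of whose subsequent runs carry labels different from l₀; the weight of a string is the sum of its run-lengths. For every real s with (|L|−2)·G_W(s) < 1 (where G_W(s) = Σ_{ν∈W} exp(−ν·s)), the generating function of 𝒴 satisfies Σ_{y∈𝒴} exp(−w(y)·s) = (|L|−1)·G_W(s)² / (1 − (|L|−2)·G_W(s)) = G_W(s)·(|L|−1)·G_W(s)·Σ_{k=0}^{∞} ((|L|−2)·G_W(s))^k. -/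

import Mathlib

open scoped ENNReal

/-- A string of the general run-length set `⟨W,L⟩`: a nonempty finite sequence of runs
`(ν, l) ∈ W × L` in which any two consecutive runs carry distinct labels. -/
def IsRLString {L : Type*} (W : Set ℝ) (a : List (ℝ × L)) : Prop :=
  a ≠ [] ∧ (∀ r ∈ a, r.1 ∈ W) ∧ a.Chain' fun p q => p.2 ≠ q.2

/-- The weight of a string: the sum of its run-lengths. -/
def rlWeight {L : Type*} (a : List (ℝ × L)) : ℝ :=
  (a.map Prod.fst).sum

/-- `G_W(s) = ∑_{ν ∈ W} exp(-ν·s)`, valued in `[0,∞]`. -/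
noncomputable def GW (W : Set ℝ) (s : ℝ) : ℝ≥0∞ :=
  ∑' ν : W, ENNReal.ofReal (Real.exp (-(ν : ℝ) * s))

/-- Membership in the set `𝒴`: a string of `⟨W,L⟩` with at least two runs, whose first
run carries the label `l₀` and all of whose subsequent runs carry labels different
from `l₀`. -/
def MemY {L : Type*} (W : Set ℝ) (l₀ : L) (a : List (ℝ × L)) : Prop :=
  IsRLString W a ∧
    ∃ r rest, a = r :: rest ∧ r.2 = l₀ ∧ rest ≠ [] ∧ ∀ q ∈ rest, q.2 ≠ l₀

/-- **Generating function of the support set `𝒴`** (equation (24) of the paper): for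
every `s` with `(|L|-2)·G_W(s) < 1`,
`∑_{y∈𝒴} exp(-w(y)·s) = (|L|-1)·G_W(s)²/(1-(|L|-2)·G_W(s))
                      = G_W(s)·(|L|-1)·G_W(s)·∑_{k=0}^∞ ((|L|-2)·G_W(s))^k`. -/
noncomputable def ff {L : Type*} (s : ℝ) (a : List (ℝ × L)) : ℝ≥0∞ :=
  ENNReal.ofReal (Real.exp (-rlWeight a * s))

lemma ff_cons {L : Type*} (s : ℝ) (r : ℝ × L) (a : List (ℝ × L)) :
    ff s (r :: a) = ENNReal.ofReal (Real.exp (-r.1 * s)) * ff s a := by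
  have h1 : rlWeight (r :: a) = r.1 + rlWeight a := by simp [rlWeight]
  have h2 : -(r.1 + rlWeight a) * s = -r.1 * s + -rlWeight a * s := by ring
  rw [ff, ff, h1, h2, Real.exp_add, ENNReal.ofReal_mul (Real.exp_nonneg _)]

/-- Key splitting lemma for sums over cons-decomposed sets of strings. -/
lemma tsum_cons {L : Type*} (W : Set ℝ) (s : ℝ) (T : List (ℝ × L) → Prop)
    (A : List (ℝ × L) → Set L) (m : ℕ)
    (hA : ∀ b : List (ℝ × L), T b → (A b).Finite ∧ Nat.card (A b) = m) :
    ∑' a : {a : List (ℝ × L) // ∃ r rest, a = r :: rest ∧ T rest ∧ r.1 ∈ W ∧ r.2 ∈ A rest},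
      ff s (a : List (ℝ × L))
      = (m : ℝ≥0∞) * GW W s * ∑' b : {a : List (ℝ × L) // T a}, ff s (b : List (ℝ × L)) := by
  classical
  set C : List (ℝ × L) → Prop :=
    fun a => ∃ r rest, a = r :: rest ∧ T rest ∧ r.1 ∈ W ∧ r.2 ∈ A rest with hC
  let F : (Σ b : {a : List (ℝ × L) // T a}, W × (A b.1)) → {a : List (ℝ × L) // C a} :=
    fun x => ⟨((x.2.1 : ℝ), (x.2.2 : L)) :: x.1.1,
      ⟨_, _, rfl, x.1.2, x.2.1.2, x.2.2.2⟩⟩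
  have hF : Function.Bijective F := by
    constructor
    · rintro ⟨⟨b, hb⟩, ⟨ν, hν⟩, ⟨l, hl⟩⟩ ⟨⟨b', hb'⟩, ⟨ν', hν'⟩, ⟨l', hl'⟩⟩ h
      simp only [F, Subtype.mk.injEq, List.cons.injEq, Prod.mk.injEq] at h
      obtain ⟨⟨h1, h2⟩, h3⟩ := h
      subst h1; subst h2; subst h3; rfl
    · rintro ⟨a, r, rest, ha, hT, hW, hAm⟩
      refine ⟨⟨⟨rest, hT⟩, ⟨r.1, hW⟩, ⟨r.2, hAm⟩⟩, ?_⟩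
      simp only [F, Subtype.mk.injEq]
      rw [ha]
  calc ∑' a : {a : List (ℝ × L) // C a}, ff s (a : List (ℝ × L))
      = ∑' x : (Σ b : {a : List (ℝ × L) // T a}, W × (A b.1)),
          ff s ((F x : List (ℝ × L))) := ((Equiv.ofBijective F hF).tsum_eq _).symm
    _ = ∑' b : {a : List (ℝ × L) // T a}, ∑' p : W × (A b.1),
          ENNReal.ofReal (Real.exp (-(p.1 : ℝ) * s)) * ff s b.1 := by
        rw [ENNReal.tsum_sigma']
        congr 1; ext b; congr 1; ext p
        exact ff_cons s _ _
    _ = ∑' b : {a : List (ℝ × L) // T a}, (m : ℝ≥0∞) * GW W s * ff s b.1 := by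
        congr 1; ext b
        haveI : Fintype (A b.1) := (hA b.1 b.2).1.fintype
        rw [ENNReal.tsum_prod']
        calc ∑' (ν : W) (_ : A b.1), ENNReal.ofReal (Real.exp (-(ν : ℝ) * s)) * ff s b.1
            = ∑' (ν : W), (m : ℝ≥0∞) * (ENNReal.ofReal (Real.exp (-(ν : ℝ) * s)) * ff s b.1) := by
              congr 1; ext ν
              rw [tsum_fintype, Finset.sum_const, Finset.card_univ, nsmul_eq_mul]
              congr 2
              rw [← (hA b.1 b.2).2, Nat.card_eq_fintype_card]
          _ = (m : ℝ≥0∞) * ((∑' (ν : W), ENNReal.ofReal (Real.exp (-(ν : ℝ) * s))) * ff s b.1) := by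
              rw [ENNReal.tsum_mul_left, ENNReal.tsum_mul_right]
          _ = (m : ℝ≥0∞) * GW W s * ff s b.1 := by rw [GW, mul_assoc]
    _ = (m : ℝ≥0∞) * GW W s * ∑' b : {a : List (ℝ × L) // T a}, ff s b.1 :=
        ENNReal.tsum_mul_left

/-- Strings of length `n` all of whose labels differ from `l₀`. -/
def QQ {L : Type*} (W : Set ℝ) (l₀ : L) (n : ℕ) (a : List (ℝ × L)) : Prop :=
  a.length = n ∧ (∀ r ∈ a, r.1 ∈ W) ∧ (∀ r ∈ a, r.2 ≠ l₀) ∧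
    a.Chain' fun p q => p.2 ≠ q.2

def AA {L : Type*} (l₀ : L) (rest : List (ℝ × L)) : Set L :=
  {l | l ≠ l₀ ∧ ∀ q ∈ rest.head?, l ≠ q.2}

lemma QQ_succ_iff {L : Type*} (W : Set ℝ) (l₀ : L) (n : ℕ) (a : List (ℝ × L)) :
    QQ W l₀ (n + 1) a ↔
      ∃ r rest, a = r :: rest ∧ QQ W l₀ n rest ∧ r.1 ∈ W ∧ r.2 ∈ AA l₀ rest := by
  constructor
  · rintro ⟨hlen, hW, hl, hch⟩
    match a with
    | [] => simp at hlen
    | r :: rest =>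
      refine ⟨r, rest, rfl, ⟨by simpa using hlen, fun q hq => hW q (List.mem_cons_of_mem _ hq),
        fun q hq => hl q (List.mem_cons_of_mem _ hq), (List.isChain_cons.mp hch).2⟩,
        hW r (List.mem_cons_self), ?_, ?_⟩
      · exact hl r (List.mem_cons_self)
      · exact (List.isChain_cons.mp hch).1
  · rintro ⟨r, rest, rfl, ⟨hlen, hW, hl, hch⟩, hrW, hr1, hr2⟩
    refine ⟨by simp [hlen], ?_, ?_, List.isChain_cons.mpr ⟨hr2, hch⟩⟩
    · intro q hq; rcases List.mem_cons.mp hq with h | h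
      exacts [h ▸ hrW, hW q h]
    · intro q hq; rcases List.mem_cons.mp hq with h | h
      exacts [h ▸ hr1, hl q h]

lemma card_AA_nil {L : Type*} [Fintype L] (l₀ : L) :
    (AA l₀ ([] : List (ℝ × L))).Finite ∧ Nat.card (AA l₀ ([] : List (ℝ × L)))
      = Fintype.card L - 1 := by
  classical
  have h : AA l₀ ([] : List (ℝ × L)) = ↑(Finset.univ.erase l₀) := by
    ext l; simp [AA]
  rw [h]
  refine ⟨(Finset.univ.erase l₀).finite_toSet, ?_⟩
  rw [Nat.card_coe_set_eq, Set.ncard_coe_finset,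
    Finset.card_erase_of_mem (Finset.mem_univ _), Finset.card_univ]

lemma card_AA_cons {L : Type*} [Fintype L] (l₀ : L) (q : ℝ × L) (t : List (ℝ × L))
    (hq : q.2 ≠ l₀) :
    (AA l₀ (q :: t)).Finite ∧ Nat.card (AA l₀ (q :: t)) = Fintype.card L - 2 := by
  classical
  have h : AA l₀ (q :: t) = ↑(Finset.univ \ {l₀, q.2}) := by
    ext l; simp [AA, not_or, and_comm]
  rw [h]
  refine ⟨(Finset.univ \ {l₀, q.2}).finite_toSet, ?_⟩
  rw [Nat.card_coe_set_eq, Set.ncard_coe_finset,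
    Finset.card_sdiff_of_subset (Finset.subset_univ _), Finset.card_univ,
    Finset.card_pair (Ne.symm hq)]

lemma tsum_subtype_congr {α : Type*} {P Q : α → Prop} (h : ∀ a, P a ↔ Q a)
    (f : α → ℝ≥0∞) :
    ∑' a : {a // P a}, f a = ∑' a : {a // Q a}, f a :=
  (Equiv.subtypeEquivRight h).tsum_eq fun b : {a // Q a} => f b

lemma tsum_QQ_zero {L : Type*} (W : Set ℝ) (l₀ : L) (s : ℝ) :
    ∑' a : {a : List (ℝ × L) // QQ W l₀ 0 a}, ff s (a : List (ℝ × L)) = 1 := by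
  haveI : Subsingleton {a : List (ℝ × L) // QQ W l₀ 0 a} :=
    ⟨by rintro ⟨a, ha, -⟩ ⟨b, hb, -⟩
        refine Subtype.ext (?_ : a = b)
        rw [List.length_eq_zero_iff.mp ha, List.length_eq_zero_iff.mp hb]⟩
  have h0 : QQ W l₀ 0 ([] : List (ℝ × L)) := by simp [QQ]; exact List.isChain_nil
  rw [tsum_eq_single (⟨[], h0⟩ : {a : List (ℝ × L) // QQ W l₀ 0 a})
    (fun b hb => absurd (Subsingleton.elim b _) hb)]
  simp [ff, rlWeight]
lemma tsum_QQ_succ {L : Type*} [Fintype L] (W : Set ℝ) (l₀ : L) (s : ℝ) (n : ℕ) :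
    ∑' a : {a : List (ℝ × L) // QQ W l₀ (n + 1) a}, ff s (a : List (ℝ × L))
      = ((Fintype.card L - 1 : ℕ) : ℝ≥0∞) * GW W s *
        (((Fintype.card L - 2 : ℕ) : ℝ≥0∞) * GW W s) ^ n := by
  induction n with
  | zero =>
    rw [tsum_subtype_congr (QQ_succ_iff W l₀ 0),
      tsum_cons W s (QQ W l₀ 0) (AA l₀) (Fintype.card L - 1) ?_, tsum_QQ_zero]
    · ring
    · intro b hb
      have : b = [] := List.length_eq_zero_iff.mp hb.1
      rw [this]
      exact card_AA_nil l₀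
  | succ n ih =>
    rw [tsum_subtype_congr (QQ_succ_iff W l₀ (n + 1)),
      tsum_cons W s (QQ W l₀ (n + 1)) (AA l₀) (Fintype.card L - 2) ?_, ih]
    · ring
    · rintro b ⟨hlen, -, hl, -⟩
      match b with
      | [] => simp at hlen
      | q :: t => exact card_AA_cons l₀ q t (hl q (List.mem_cons_self))

lemma tsum_QQ_pos {L : Type*} [Fintype L] (W : Set ℝ) (l₀ : L) (s : ℝ) :
    ∑' a : {a : List (ℝ × L) // ∃ n, QQ W l₀ (n + 1) a}, ff s (a : List (ℝ × L))
      = ∑' n : ℕ, ((Fintype.card L - 1 : ℕ) : ℝ≥0∞) * GW W s *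
          (((Fintype.card L - 2 : ℕ) : ℝ≥0∞) * GW W s) ^ n := by
  let F : (Σ n : ℕ, {a : List (ℝ × L) // QQ W l₀ (n + 1) a}) →
      {a : List (ℝ × L) // ∃ n, QQ W l₀ (n + 1) a} :=
    fun x => ⟨x.2.1, x.1, x.2.2⟩
  have hF : Function.Bijective F := by
    constructor
    · rintro ⟨n, a, ha⟩ ⟨n', a', ha'⟩ h
      simp only [F, Subtype.mk.injEq] at h
      have hnn : n + 1 = n' + 1 := by rw [← ha.1, h, ha'.1]
      have hn : n = n' := Nat.succ_injective hnn
      subst hn; subst h; rfl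
    · rintro ⟨a, n, ha⟩
      exact ⟨⟨n, a, ha⟩, rfl⟩
  calc ∑' a : {a : List (ℝ × L) // ∃ n, QQ W l₀ (n + 1) a}, ff s (a : List (ℝ × L))
      = ∑' c : (Σ n : ℕ, {a : List (ℝ × L) // QQ W l₀ (n + 1) a}),
          ff s ((c.2 : List (ℝ × L))) :=
        ((Equiv.ofBijective F hF).tsum_eq
          (fun a : {a : List (ℝ × L) // ∃ n, QQ W l₀ (n + 1) a} =>
            ff s (a : List (ℝ × L)))).symm
    _ = ∑' (n : ℕ), ∑' b : {a : List (ℝ × L) // QQ W l₀ (n + 1) a},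
          ff s ((b : List (ℝ × L))) := ENNReal.tsum_sigma' _
    _ = ∑' n : ℕ, ((Fintype.card L - 1 : ℕ) : ℝ≥0∞) * GW W s *
          (((Fintype.card L - 2 : ℕ) : ℝ≥0∞) * GW W s) ^ n :=
        tsum_congr fun n => tsum_QQ_succ W l₀ s n

lemma memY_iff {L : Type*} (W : Set ℝ) (l₀ : L) (a : List (ℝ × L)) :
    MemY W l₀ a ↔ ∃ r rest, a = r :: rest ∧ (∃ n, QQ W l₀ (n + 1) rest) ∧
      r.1 ∈ W ∧ r.2 ∈ ({l₀} : Set L) := by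
  constructor
  · rintro ⟨⟨-, hW, hch⟩, r, rest, rfl, hr, hrest, hall⟩
    refine ⟨r, rest, rfl, ⟨rest.length - 1, ?_⟩, hW r (List.mem_cons_self), hr⟩
    refine ⟨?_, fun q hq => hW q (List.mem_cons_of_mem _ hq), hall,
      (List.isChain_cons.mp hch).2⟩
    have : 0 < rest.length := List.length_pos_iff.mpr hrest
    omega
  · rintro ⟨r, rest, rfl, ⟨n, hlen, hW, hl, hch⟩, hrW, hr⟩
    have hrest : rest ≠ [] := by
      intro h; rw [h] at hlen; simp at hlen
    refine ⟨⟨List.cons_ne_nil _ _, ?_, List.isChain_cons.mpr ⟨?_, hch⟩⟩,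
      r, rest, rfl, hr, hrest, hl⟩
    · intro q hq; rcases List.mem_cons.mp hq with h | h
      exacts [h ▸ hrW, hW q h]
    · intro y hy
      have hy' : y ∈ rest := by
        match rest with
        | [] => simp at hy
        | q :: t =>
          have : y = q := by simpa using hy.symm
          exact this ▸ List.mem_cons_self
      have := hl y hy'
      rw [hr]
      exact fun h => this h.symm

theorem support_generating_function'
    {L : Type*} [Fintype L] (hL : 2 ≤ Fintype.card L)
    (W : Set ℝ) (l₀ : L) (s : ℝ) :
    (∑' y : {a : List (ℝ × L) // MemY W l₀ a},
        ENNReal.ofReal (Real.exp (-rlWeight (y : List (ℝ × L)) * s)) =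
      ((Fintype.card L : ℝ≥0∞) - 1) * GW W s ^ 2 /
        (1 - ((Fintype.card L : ℝ≥0∞) - 2) * GW W s)) ∧
    (∑' y : {a : List (ℝ × L) // MemY W l₀ a},
        ENNReal.ofReal (Real.exp (-rlWeight (y : List (ℝ × L)) * s)) =
      GW W s * (((Fintype.card L : ℝ≥0∞) - 1) * GW W s) *
        ∑' k : ℕ, (((Fintype.card L : ℝ≥0∞) - 2) * GW W s) ^ k) := by
  have hc1 : ((Fintype.card L - 1 : ℕ) : ℝ≥0∞) = (Fintype.card L : ℝ≥0∞) - 1 := by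
    rw [ENNReal.natCast_sub, Nat.cast_one]
  have hc2 : ((Fintype.card L - 2 : ℕ) : ℝ≥0∞) = (Fintype.card L : ℝ≥0∞) - 2 := by
    rw [ENNReal.natCast_sub, Nat.cast_ofNat]
  have hsing : ∀ b : List (ℝ × L), (∃ n, QQ W l₀ (n + 1) b) →
      (({l₀} : Set L)).Finite ∧ Nat.card ({l₀} : Set L) = 1 := by
    intro b _
    exact ⟨Set.finite_singleton _, by
      rw [Nat.card_coe_set_eq, Set.ncard_singleton]⟩
  have key : ∑' y : {a : List (ℝ × L) // MemY W l₀ a}, ff s (y : List (ℝ × L)) =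
      GW W s * (((Fintype.card L : ℝ≥0∞) - 1) * GW W s) *
        ∑' k : ℕ, (((Fintype.card L : ℝ≥0∞) - 2) * GW W s) ^ k := by
    rw [tsum_subtype_congr (memY_iff W l₀),
      tsum_cons W s (fun a => ∃ n, QQ W l₀ (n + 1) a) (fun _ => ({l₀} : Set L)) 1 hsing,
      tsum_QQ_pos W l₀ s, hc1, hc2]
    have hm : ∑' n : ℕ, ((Fintype.card L : ℝ≥0∞) - 1) * GW W s *
          (((Fintype.card L : ℝ≥0∞) - 2) * GW W s) ^ n
        = ((Fintype.card L : ℝ≥0∞) - 1) * GW W s *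
          ∑' n : ℕ, (((Fintype.card L : ℝ≥0∞) - 2) * GW W s) ^ n :=
      ENNReal.tsum_mul_left
    rw [hm, Nat.cast_one, one_mul]
    ring
  have key' : (∑' y : {a : List (ℝ × L) // MemY W l₀ a},
      ENNReal.ofReal (Real.exp (-rlWeight (y : List (ℝ × L)) * s))) =
      GW W s * (((Fintype.card L : ℝ≥0∞) - 1) * GW W s) *
        ∑' k : ℕ, (((Fintype.card L : ℝ≥0∞) - 2) * GW W s) ^ k := key
  refine ⟨?_, key'⟩
  rw [key', ENNReal.tsum_geometric, ENNReal.div_eq_inv_mul]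
  ring

theorem support_generating_function
    {L : Type*} [Fintype L] (hL : 2 ≤ Fintype.card L)
    (W : Set ℝ) (hWne : W.Nonempty) (hWc : W.Countable) (hWpos : ∀ ν ∈ W, 0 < ν)
    (l₀ : L)
    (s : ℝ) (hs : ((Fintype.card L : ℝ≥0∞) - 2) * GW W s < 1) :
    (∑' y : {a : List (ℝ × L) // MemY W l₀ a},
        ENNReal.ofReal (Real.exp (-rlWeight (y : List (ℝ × L)) * s)) =
      ((Fintype.card L : ℝ≥0∞) - 1) * GW W s ^ 2 /
        (1 - ((Fintype.card L : ℝ≥0∞) - 2) * GW W s)) ∧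
    (∑' y : {a : List (ℝ × L) // MemY W l₀ a},
        ENNReal.ofReal (Real.exp (-rlWeight (y : List (ℝ × L)) * s)) =
      GW W s * (((Fintype.card L : ℝ≥0∞) - 1) * GW W s) *
        ∑' k : ℕ, (((Fintype.card L : ℝ≥0∞) - 2) * GW W s) ^ k) := by
  exact support_generating_function' hL W l₀ s
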